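/- Every bounded affine permutation $f$ of type $(k,n)$ admits a unique factorization $f = \sigma \circ t_\mu$ with $\sigma \in S_n$ (extended periodically) and $\mu \in \binom{[n]}{k}$, and a unique factorization $f = t_\nu \circ \sigma'$ with $\sigma' \in S_n$ and $\nu \in \binom{[n]}{k}$. -/

import Mathlib

/-- Coxeter length of a permutation of `Fin n`: the number of inversions. -/
def len {n : ℕ} (u : Equiv.Perm (Fin n)) : ℕ :=
  (Finset.univ.filter fun p : Fin n × Fin n => p.1 < p.2 ∧ u p.2 < u p.1).card

/-- `w` covers `u` in the strong Bruhat order: `w = u·t` for a transposition `t`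
and `ℓ(w) = ℓ(u) + 1`. -/
def BruhatCover {n : ℕ} (u w : Equiv.Perm (Fin n)) : Prop :=
  (∃ i j : Fin n, i ≠ j ∧ w = u * Equiv.swap i j) ∧ len w = len u + 1

/-- The strong Bruhat order on `S_n`. -/
def BruhatLE {n : ℕ} (u w : Equiv.Perm (Fin n)) : Prop :=
  Relation.ReflTransGen BruhatCover u w

/-- The image `u({1,…,k})`, zero-indexed as `u({i : i.val < k})`. -/
def kImage {n : ℕ} (k : ℕ) (u : Equiv.Perm (Fin n)) : Finset (Fin n) :=
  (Finset.univ.filter fun i : Fin n => i.val < k).image u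

/-- `w` is a `k`-cover of `u`: a Bruhat cover with `w({1,…,k}) ≠ u({1,…,k})`. -/
def KBruhatCover {n : ℕ} (k : ℕ) (u w : Equiv.Perm (Fin n)) : Prop :=
  BruhatCover u w ∧ kImage k u ≠ kImage k w

/-- The `k`-Bruhat order on `S_n`: transitive closure of `k`-covers. -/
def KBruhatLE {n : ℕ} (k : ℕ) (u w : Equiv.Perm (Fin n)) : Prop :=
  Relation.ReflTransGen (KBruhatCover k) u w

/-- `z` lies in the Young subgroup `S_k × S_{n-k}`, i.e. `z` fixes the sets
`{1,…,k}` and `{k+1,…,n}` setwise. -/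
def IsYoung {n : ℕ} (k : ℕ) (z : Equiv.Perm (Fin n)) : Prop :=
  ∀ i : Fin n, (z i).val < k ↔ i.val < k

/-- `u` is anti-Grassmannian of type `(k,n)`: decreasing on `{1,…,k}` and on
`{k+1,…,n}` (zero-indexed: on `val < k` and on `k ≤ val`). -/
def AntiGrass {n : ℕ} (k : ℕ) (u : Equiv.Perm (Fin n)) : Prop :=
  (∀ a b : Fin n, a < b → b.val < k → u b < u a) ∧
  (∀ a b : Fin n, a < b → k ≤ a.val → u b < u a)

/-- The residue of `i : ℤ` modulo `n`, as an element of `Fin n` (zero-indexed). -/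
def resFin {n : ℕ} [NeZero n] (i : ℤ) : Fin n :=
  ⟨(i % (n : ℤ)).toNat, by
    have hn : 0 < (n : ℤ) := by exact_mod_cast Nat.pos_of_ne_zero (NeZero.ne n)
    have h1 := Int.emod_nonneg i (ne_of_gt hn)
    have h2 := Int.emod_lt_of_pos i hn
    omega⟩

/-- The `n`-periodic extension of a permutation of `Fin n` to a bijection of `ℤ`. -/
def extPerm {n : ℕ} [NeZero n] (u : Equiv.Perm (Fin n)) : ℤ → ℤ :=
  fun i => (n : ℤ) * (i / (n : ℤ)) + ((u (resFin i)).val : ℤ)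

/-- The translation element `t_J : ℤ → ℤ`, sending `i ↦ i + n` when the residue
of `i` lies in `J`, and fixing `i` otherwise. -/
def transJ {n : ℕ} [NeZero n] (J : Finset (Fin n)) : ℤ → ℤ :=
  fun i => if resFin i ∈ J then i + (n : ℤ) else i

/-- The index set `ω_k = {1,…,k}` (zero-indexed: residues `< k`). -/
def omegaSet (n k : ℕ) : Finset (Fin n) :=
  Finset.univ.filter fun i : Fin n => i.val < k

/-- The affine permutation `f_{u,w} = u ∘ t_{ω_k} ∘ w⁻¹`. -/
def fUW {n : ℕ} [NeZero n] (k : ℕ) (u w : Equiv.Perm (Fin n)) : ℤ → ℤ :=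
  extPerm u ∘ transJ (omegaSet n k) ∘ extPerm w⁻¹

section AuxBAUF
variable {n : ℕ} [NeZero n]

lemma npos' : (0:ℤ) < (n:ℤ) := by exact_mod_cast Nat.pos_of_ne_zero (NeZero.ne n)

lemma resFin_val_eq (i : ℤ) : (((resFin (n := n) i)).val : ℤ) = i % (n:ℤ) :=
  Int.toNat_of_nonneg (Int.emod_nonneg i (ne_of_gt (npos' (n := n))))

lemma resFin_coe (r : Fin n) : resFin (n := n) (r.val : ℤ) = r := by
  apply Fin.ext
  have h : (((resFin (n := n) (r.val : ℤ))).val : ℤ) = (r.val : ℤ) := by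
    rw [resFin_val_eq]
    exact Int.emod_eq_of_lt (by positivity) (by exact_mod_cast r.isLt)
  exact_mod_cast h

lemma resFin_add_n (i : ℤ) : resFin (n := n) (i + n) = resFin (n := n) i := by
  apply Fin.ext
  have h : (((resFin (n := n) (i + n))).val : ℤ) = (((resFin (n := n) i)).val : ℤ) := by
    rw [resFin_val_eq, resFin_val_eq]; have := Int.add_mul_emod_self_left (a := i) (b := (n:ℤ)) (c := 1); simpa using this
  exact_mod_cast h

lemma resFin_n_mul_add (q : ℤ) (r : Fin n) : resFin (n := n) ((n:ℤ) * q + (r.val : ℤ)) = r := by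
  apply Fin.ext
  have h : (((resFin (n := n) ((n:ℤ) * q + (r.val : ℤ)))).val : ℤ) = (r.val : ℤ) := by
    rw [resFin_val_eq]
    rw [add_comm, Int.add_mul_emod_self_left]
    exact Int.emod_eq_of_lt (by positivity) (by exact_mod_cast r.isLt)
  exact_mod_cast h

omit [NeZero n] in
lemma coe_ediv_eq_zero (r : Fin n) : ((r.val : ℤ)) / (n:ℤ) = 0 :=
  Int.ediv_eq_zero_of_lt (by positivity) (by exact_mod_cast r.isLt)

lemma add_n_ediv (i : ℤ) : (i + (n:ℤ)) / (n:ℤ) = i / n + 1 := by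
  have h := Int.add_mul_ediv_right i 1 (ne_of_gt (npos' (n := n)))
  simpa using h

lemma eval_ut (u : Equiv.Perm (Fin n)) (J : Finset (Fin n)) (i : ℤ) :
    (extPerm u ∘ transJ J) i =
      (n:ℤ) * (i / n) + ((u (resFin i)).val : ℤ) + (if resFin i ∈ J then (n:ℤ) else 0) := by
  simp only [Function.comp, transJ]
  split
  · rw [extPerm]
    simp only [resFin_add_n, add_n_ediv]
    ring
  · simp [extPerm]

lemma eval_tu (u : Equiv.Perm (Fin n)) (J : Finset (Fin n)) (i : ℤ) :
    (transJ J ∘ extPerm u) i =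
      (n:ℤ) * (i / n) + ((u (resFin i)).val : ℤ) + (if u (resFin i) ∈ J then (n:ℤ) else 0) := by
  simp only [Function.comp, extPerm, transJ, resFin_n_mul_add]
  split <;> ring

end AuxBAUF

/-- Every bounded affine permutation of type `(k,n)` factors uniquely as
`σ ∘ t_μ` and uniquely as `t_ν ∘ σ'` with `σ, σ' ∈ S_n` and `μ, ν` `k`-element
subsets of `{1,…,n}`. -/
theorem bounded_affine_unique_factorization {n k : ℕ} [NeZero n] (f : ℤ → ℤ)
    (hbij : Function.Bijective f)
    (hper : ∀ i : ℤ, f (i + n) = f i + n)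
    (hbd : ∀ i : ℤ, i ≤ f i ∧ f i ≤ i + n)
    (hsum : (∑ i ∈ Finset.range n, (f (i : ℤ) - (i : ℤ))) = (n : ℤ) * k) :
    (∃! p : Equiv.Perm (Fin n) × Finset (Fin n),
        p.2.card = k ∧ f = extPerm p.1 ∘ transJ p.2) ∧
    (∃! q : Equiv.Perm (Fin n) × Finset (Fin n),
        q.2.card = k ∧ f = transJ q.2 ∘ extPerm q.1) := by
  have hn0 : (n:ℤ) ≠ 0 := ne_of_gt (npos' (n := n))
  -- extended periodicity
  have hperZ : ∀ i q : ℤ, f (i + n * q) = f i + n * q := by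
    intro i q
    induction q using Int.induction_on with
    | zero => simp
    | succ m ih =>
        have h1 : i + (n:ℤ) * ((m:ℤ) + 1) = (i + n * m) + n := by ring
        rw [h1, hper, ih]; ring
    | pred m ih =>
        have h1 : i + (n:ℤ) * (-(m:ℤ) - 1) + n = i + n * (-(m:ℤ)) := by ring
        have h2 := hper (i + (n:ℤ) * (-(m:ℤ) - 1))
        rw [h1, ih] at h2
        linarith
  have hrepr : ∀ i : ℤ, f i = f (((resFin (n := n) i).val : ℤ)) + (n:ℤ) * (i / n) := by
    intro i
    have h1 : i % (n:ℤ) + (n:ℤ) * (i / n) = i := Int.emod_add_mul_ediv i n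
    calc f i = f (i % (n:ℤ) + (n:ℤ) * (i / n)) := by rw [h1]
      _ = f (i % (n:ℤ)) + (n:ℤ) * (i / n) := hperZ _ _
      _ = _ := by rw [resFin_val_eq]
  -- the underlying permutation
  have hginj : Function.Injective (fun r : Fin n => resFin (n := n) (f (r.val : ℤ))) := by
    intro r1 r2 hres
    have hmod : f (r1.val:ℤ) % n = f (r2.val:ℤ) % n := by
      have h := congrArg (fun x : Fin n => (x.val : ℤ)) hres
      simpa [resFin_val_eq] using h
    set q : ℤ := f (r1.val:ℤ) / n - f (r2.val:ℤ) / n with hq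
    have e1 := Int.emod_add_mul_ediv (f (r1.val:ℤ)) (n:ℤ)
    have e2 := Int.emod_add_mul_ediv (f (r2.val:ℤ)) (n:ℤ)
    have h1 : f (r1.val:ℤ) = f (r2.val:ℤ) + (n:ℤ) * q := by
      have : (n:ℤ) * q = n * (f (r1.val:ℤ) / n) - n * (f (r2.val:ℤ) / n) := by rw [hq]; ring
      rw [this]; linarith [hmod]
    have h2 : f (r1.val:ℤ) = f ((r2.val:ℤ) + (n:ℤ) * q) := by rw [hperZ]; exact h1
    have h3 : (r1.val:ℤ) = (r2.val:ℤ) + (n:ℤ) * q := hbij.injective h2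
    have hb1 : (r1.val:ℤ) < n := by exact_mod_cast r1.isLt
    have hb2 : (r2.val:ℤ) < n := by exact_mod_cast r2.isLt
    have hb1' : (0:ℤ) ≤ (r1.val:ℤ) := by positivity
    have hb2' : (0:ℤ) ≤ (r2.val:ℤ) := by positivity
    have hq0 : q = 0 := by
      by_contra hqne
      rcases lt_or_gt_of_ne hqne with h | h
      · have hle : q ≤ -1 := by omega
        have := mul_le_mul_of_nonneg_left hle (le_of_lt (npos' (n := n)))
        nlinarith
      · have hle : (1:ℤ) ≤ q := by omega
        have := mul_le_mul_of_nonneg_left hle (le_of_lt (npos' (n := n)))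
        nlinarith
    rw [hq0] at h3
    apply Fin.ext
    exact_mod_cast (by linarith [h3] : (r1.val:ℤ) = (r2.val:ℤ))
  set σ : Equiv.Perm (Fin n) :=
    Equiv.ofBijective _ (Finite.injective_iff_bijective.mp hginj) with hσdef
  have hσ : ∀ r : Fin n, σ r = resFin (n := n) (f (r.val : ℤ)) := fun r => rfl
  set μ : Finset (Fin n) := Finset.univ.filter (fun r : Fin n => (n:ℤ) ≤ f (r.val:ℤ)) with hμdef
  have hμmem : ∀ r : Fin n, r ∈ μ ↔ (n:ℤ) ≤ f (r.val:ℤ) := by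
    intro r; simp [hμdef]
  have hbd' : ∀ r : Fin n, (0:ℤ) ≤ f (r.val:ℤ) ∧ f (r.val:ℤ) < 2 * n := by
    intro r
    have h1 := (hbd (r.val:ℤ)).1
    have h2 := (hbd (r.val:ℤ)).2
    have hb1 : (r.val:ℤ) < n := by exact_mod_cast r.isLt
    have hb1' : (0:ℤ) ≤ (r.val:ℤ) := by positivity
    constructor <;> linarith
  -- the key value formula
  have hval : ∀ r : Fin n,
      f (r.val:ℤ) = ((σ r).val : ℤ) + (if r ∈ μ then (n:ℤ) else 0) := by
    intro r
    rw [hσ r, resFin_val_eq]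
    obtain ⟨hge0, hlt2⟩ := hbd' r
    by_cases hm : r ∈ μ
    · have hge : (n:ℤ) ≤ f (r.val:ℤ) := (hμmem r).mp hm
      rw [if_pos hm]
      have hsub : f (r.val:ℤ) % n = f (r.val:ℤ) - n := by
        rw [Int.emod_eq_sub_self_emod]
        exact Int.emod_eq_of_lt (by linarith) (by linarith)
      rw [hsub]; ring
    · have hlt : f (r.val:ℤ) < n := by
        have := (hμmem r).not.mp hm; linarith [not_le.mp this]
      rw [if_neg hm]
      rw [Int.emod_eq_of_lt hge0 hlt]; ring
  -- cardinality
  have hcard : μ.card = k := by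
    have hs1 : ∑ r : Fin n, (f (r.val:ℤ) - (r.val:ℤ)) = (n:ℤ) * k := by
      rw [Fin.sum_univ_eq_sum_range (fun i : ℕ => f (i:ℤ) - (i:ℤ)) n]
      exact hsum
    have hs2 : ∑ r : Fin n, (f (r.val:ℤ) - (r.val:ℤ)) = (n:ℤ) * μ.card := by
      have hterm : ∀ r : Fin n, f (r.val:ℤ) - (r.val:ℤ) =
          (((σ r).val : ℤ) - (r.val:ℤ)) + (if r ∈ μ then (n:ℤ) else 0) := by
        intro r; rw [hval r]; ring
      rw [Finset.sum_congr rfl (fun r _ => hterm r), Finset.sum_add_distrib,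
        Finset.sum_sub_distrib]
      have hperm : ∑ r : Fin n, ((σ r).val : ℤ) = ∑ r : Fin n, (r.val:ℤ) :=
        Equiv.sum_comp σ (fun r : Fin n => (r.val:ℤ))
      rw [hperm, sub_self, zero_add, Finset.sum_ite_mem, Finset.univ_inter,
        Finset.sum_const, nsmul_eq_mul]
      ring
    have : (n:ℤ) * μ.card = (n:ℤ) * k := by rw [← hs2, hs1]
    have := mul_left_cancel₀ hn0 this
    exact_mod_cast this
  -- first factorization
  have hfact1 : f = extPerm σ ∘ transJ μ := by
    funext i
    rw [eval_ut, hrepr i, hval (resFin i)]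
    ring
  -- second factorization
  set ν : Finset (Fin n) := μ.image σ with hνdef
  have hmemν : ∀ r : Fin n, σ r ∈ ν ↔ r ∈ μ := by
    intro r
    constructor
    · intro h
      rcases Finset.mem_image.mp h with ⟨r', hr', he⟩
      rwa [← σ.injective he]
    · intro h; exact Finset.mem_image_of_mem σ h
  have hνcard : ν.card = k := by
    rw [hνdef, Finset.card_image_of_injective _ σ.injective, hcard]
  have hfact2 : f = transJ ν ∘ extPerm σ := by
    funext i
    rw [eval_tu, hrepr i, hval (resFin i)]
    have : (if σ (resFin i) ∈ ν then (n:ℤ) else 0) = (if resFin i ∈ μ then (n:ℤ) else 0) := by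
      simp only [hmemν]
    rw [this]; ring
  constructor
  · refine ⟨(σ, μ), ⟨hcard, hfact1⟩, ?_⟩
    rintro ⟨τ, J⟩ ⟨hJc, hJf⟩
    have key : ∀ r : Fin n,
        f (r.val:ℤ) = ((τ r).val : ℤ) + (if r ∈ J then (n:ℤ) else 0) := by
      intro r
      have h := congrFun hJf (r.val:ℤ)
      rw [eval_ut, resFin_coe, coe_ediv_eq_zero] at h
      simpa using h
    have hpoint : ∀ r : Fin n, τ r = σ r ∧ (r ∈ J ↔ r ∈ μ) := by
      intro r
      have h1 := hval r
      have h2 := key r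
      have hb1 : (σ r).val < n := (σ r).isLt
      have hb2 : (τ r).val < n := (τ r).isLt
      have hmiff : (r ∈ J ↔ r ∈ μ) := by
        by_cases hJ : r ∈ J <;> by_cases hμm : r ∈ μ <;>
          simp only [hJ, hμm, if_true, if_false] at h1 h2
        · simp [hJ, hμm]
        · exfalso; omega
        · exfalso; omega
        · simp [hJ, hμm]
      have hveq : τ r = σ r := by
        apply Fin.ext
        simp only [hmiff] at h2
        by_cases hμm : r ∈ μ <;> simp only [hμm, if_true, if_false] at h1 h2 <;> omega
      exact ⟨hveq, hmiff⟩
    have hτ : τ = σ := Equiv.ext (fun r => (hpoint r).1)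
    have hJ : J = μ := Finset.ext (fun r => (hpoint r).2)
    simp [hτ, hJ]
  · refine ⟨(σ, ν), ⟨hνcard, hfact2⟩, ?_⟩
    rintro ⟨τ, J⟩ ⟨hJc, hJf⟩
    have key : ∀ r : Fin n,
        f (r.val:ℤ) = ((τ r).val : ℤ) + (if τ r ∈ J then (n:ℤ) else 0) := by
      intro r
      have h := congrFun hJf (r.val:ℤ)
      rw [eval_tu, resFin_coe, coe_ediv_eq_zero] at h
      simpa using h
    have hpoint : ∀ r : Fin n, τ r = σ r ∧ (τ r ∈ J ↔ r ∈ μ) := by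
      intro r
      have h1 := hval r
      have h2 := key r
      have hb1 : (σ r).val < n := (σ r).isLt
      have hb2 : (τ r).val < n := (τ r).isLt
      have hmiff : (τ r ∈ J ↔ r ∈ μ) := by
        by_cases hJ : τ r ∈ J <;> by_cases hμm : r ∈ μ <;>
          simp only [hJ, hμm, if_true, if_false] at h1 h2
        · simp [hJ, hμm]
        · exfalso; omega
        · exfalso; omega
        · simp [hJ, hμm]
      have hveq : τ r = σ r := by
        apply Fin.ext
        simp only [hmiff] at h2
        by_cases hμm : r ∈ μ <;> simp only [hμm, if_true, if_false] at h1 h2 <;> omega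
      exact ⟨hveq, hmiff⟩
    have hτ : τ = σ := Equiv.ext (fun r => (hpoint r).1)
    have hJ : J = ν := by
      apply Finset.ext
      intro s
      obtain ⟨r, hr⟩ := σ.surjective s
      have hp := hpoint r
      rw [hτ] at hp
      rw [← hr, hp.2, ← hmemν r]
    simp [hτ, hJ]
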